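/- Let p ≥ 2 and let G be a 2p-regular (p+2)-star colourable graph. Then the chromatic number of G satisfies χ(G) ≤ 3·log₂(p+2). -/

import Mathlib

set_option linter.unusedSectionVars false

open Finset SimpleGraph

/-- A star colouring: a proper colouring with no bicoloured 4-vertex path. -/
def IsStarColoring {V : Type*} {α : Type*} (G : SimpleGraph V) (f : V → α) : Prop :=
  (∀ ⦃u v : V⦄, G.Adj u v → f u ≠ f v) ∧
  ∀ ⦃a b c d : V⦄, G.Adj a b → G.Adj b c → G.Adj c d →
    a ≠ c → a ≠ d → b ≠ d → ¬(f a = f c ∧ f b = f d)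

section Aux

variable {V : Type*} (G : SimpleGraph V) [Fintype V] [DecidableEq V] [DecidableRel G.Adj]

/-- multiplicity of colour `c` in the neighbourhood of `v` -/
def mlt {n : ℕ} (f : V → Fin n) (v : V) (c : Fin n) : ℕ :=
  ((G.neighborFinset v).filter (fun w => f w = c)).card

/-- set of colours repeated in the neighbourhood of `v` -/
def Dst {n : ℕ} (f : V → Fin n) (v : V) : Finset (Fin n) :=
  Finset.univ.filter (fun c => 2 ≤ mlt G f v c)

/-- number of colours appearing exactly once in the neighbourhood of `v` -/
def sct {n : ℕ} (f : V → Fin n) (v : V) : ℕ :=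
  (Finset.univ.filter (fun c => mlt G f v c = 1)).card

def outd {n : ℕ} (f : V → Fin n) (v : V) : ℕ :=
  ((G.neighborFinset v).filter (fun w => 2 ≤ mlt G f v (f w))).card

def ind {n : ℕ} (f : V → Fin n) (v : V) : ℕ :=
  ((G.neighborFinset v).filter (fun w => 2 ≤ mlt G f w (f v))).card

variable {G}

lemma mlt_sum {n : ℕ} (f : V → Fin n) (v : V) :
    ∑ c : Fin n, mlt G f v c = (G.neighborFinset v).card := by
  exact (Finset.card_eq_sum_card_fiberwise (fun w _ => Finset.mem_univ (f w))).symm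

lemma mlt_self {n : ℕ} {f : V → Fin n} (hf1 : ∀ ⦃u v : V⦄, G.Adj u v → f u ≠ f v)
    (v : V) : mlt G f v (f v) = 0 := by
  rw [mlt, Finset.card_eq_zero, Finset.filter_eq_empty_iff]
  intro w hw
  rw [SimpleGraph.mem_neighborFinset] at hw
  exact hf1 hw.symm

/-- Star colourings forbid two adjacent "centres". -/
lemma star_not_both {n : ℕ} {f : V → Fin n} (hf : IsStarColoring G f)
    {v w : V} (hadj : G.Adj v w) :
    ¬(2 ≤ mlt G f v (f w) ∧ 2 ≤ mlt G f w (f v)) := by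
  rintro ⟨h1, h2⟩
  have h1' : 1 < ((G.neighborFinset v).filter (fun x => f x = f w)).card := h1
  have h2' : 1 < ((G.neighborFinset w).filter (fun x => f x = f v)).card := h2
  obtain ⟨u', hu', hu'w⟩ := Finset.exists_mem_ne h1' w
  obtain ⟨v', hv', hv'v⟩ := Finset.exists_mem_ne h2' v
  rw [Finset.mem_filter, SimpleGraph.mem_neighborFinset] at hu' hv'
  -- path u' - v - w - v'
  have hne : f v ≠ f w := hf.1 hadj
  have hafw : f u' = f w := hu'.2
  have hbfv : f v' = f v := hv'.2
  refine hf.2 (hu'.1.symm) hadj (hv'.1) hu'w ?_ hv'v.symm ⟨hafw, hbfv.symm⟩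
  -- u' ≠ v'
  intro h; rw [h, hbfv] at hafw; exact hne hafw

variable {p : ℕ}

section Struct

variable {f : V → Fin (p + 2)} (hp : 2 ≤ p) (hf : IsStarColoring G f)
  (hdeg : ∀ v : V, (G.neighborFinset v).card = 2 * p)

include hp hf hdeg

lemma Dst_nonempty_card (v : V) : 1 ≤ (Dst G f v).card := by
  by_contra h
  have hD : ∀ c, mlt G f v c ≤ 1 := by
    intro c
    by_contra hc
    have : c ∈ Dst G f v := by
      rw [Dst, Finset.mem_filter]
      exact ⟨Finset.mem_univ _, by omega⟩
    have : 0 < (Dst G f v).card := Finset.card_pos.2 ⟨c, this⟩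
    omega
  have h0 : mlt G f v (f v) = 0 := mlt_self hf.1 v
  have hsum : ∑ c : Fin (p + 2), mlt G f v c = 2 * p := by rw [mlt_sum, hdeg]
  have hsum2 : ∑ c : Fin (p + 2), mlt G f v c
      = ∑ c ∈ Finset.univ.erase (f v), mlt G f v c := by
    rw [Finset.sum_erase _ h0]
  have hle : ∑ c ∈ Finset.univ.erase (f v), mlt G f v c
      ≤ (Finset.univ.erase (f v)).card * 1 :=
    Finset.sum_le_card_nsmul _ _ 1 (fun c _ => hD c)
  rw [Finset.card_erase_of_mem (Finset.mem_univ _), Finset.card_univ, Fintype.card_fin] at hle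
  omega

lemma Dst_card_add_sct (v : V) : (Dst G f v).card + sct G f v ≤ p + 1 := by
  have h0 : mlt G f v (f v) = 0 := mlt_self hf.1 v
  have hdisj : Disjoint (Dst G f v) (Finset.univ.filter (fun c => mlt G f v c = 1)) := by
    rw [Finset.disjoint_left]
    intro c hc1 hc2
    rw [Dst, Finset.mem_filter] at hc1
    rw [Finset.mem_filter] at hc2
    omega
  have hsub : Dst G f v ∪ Finset.univ.filter (fun c => mlt G f v c = 1)
      ⊆ Finset.univ.erase (f v) := by
    intro c hc
    rw [Finset.mem_union, Dst, Finset.mem_filter, Finset.mem_filter] at hc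
    rw [Finset.mem_erase]
    refine ⟨?_, Finset.mem_univ _⟩
    rintro rfl
    omega
  have := Finset.card_le_card hsub
  rw [Finset.card_union_of_disjoint hdisj,
    Finset.card_erase_of_mem (Finset.mem_univ _), Finset.card_univ, Fintype.card_fin] at this
  exact by simpa [sct] using this

lemma outd_add_sct (v : V) : outd G f v + sct G f v = 2 * p := by
  classical
  have key : (outd G f v : ℕ) = ∑ c ∈ Dst G f v, mlt G f v c := by
    rw [outd]
    refine Finset.card_eq_sum_card_fiberwise (f := f)
      (t := Dst G f v) ?_ |>.trans ?_
    · intro w hw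
      rw [Finset.mem_coe, Finset.mem_filter] at hw
      rw [Finset.mem_coe, Dst, Finset.mem_filter]
      exact ⟨Finset.mem_univ _, hw.2⟩
    · refine Finset.sum_congr rfl (fun c hc => ?_)
      congr 1
      rw [Dst, Finset.mem_filter] at hc
      refine Finset.ext (fun w => ?_)
      simp only [Finset.mem_filter]
      constructor
      · rintro ⟨⟨hw, _⟩, h2⟩; exact ⟨hw, h2⟩
      · rintro ⟨hw, h2⟩; exact ⟨⟨hw, by rw [h2]; exact hc.2⟩, h2⟩
  have key2 : sct G f v = ∑ c ∈ Finset.univ.filter (fun c => ¬ 2 ≤ mlt G f v c),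
      mlt G f v c := by
    have : ∀ c ∈ Finset.univ.filter (fun c => ¬ 2 ≤ mlt G f v c),
        mlt G f v c = if mlt G f v c = 1 then 1 else 0 := by
      intro c hc
      rw [Finset.mem_filter] at hc
      have := hc.2
      split <;> omega
    rw [Finset.sum_congr rfl this, ← Finset.card_filter]
    rw [sct]
    congr 1
    ext c
    simp only [Finset.mem_filter, Finset.mem_univ, true_and]
    constructor
    · intro h1; exact ⟨by omega, h1⟩
    · rintro ⟨_, h1⟩; exact h1
  have hsplit := Finset.sum_filter_add_sum_filter_not Finset.univ
    (fun c => 2 ≤ mlt G f v c) (mlt G f v)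
  have hsum : ∑ c : Fin (p + 2), mlt G f v c = 2 * p := by rw [mlt_sum, hdeg]
  rw [key, key2]
  rw [Dst]
  omega

lemma outd_add_ind_le (v : V) : outd G f v + ind G f v ≤ 2 * p := by
  have hdisj : Disjoint ((G.neighborFinset v).filter (fun w => 2 ≤ mlt G f v (f w)))
      ((G.neighborFinset v).filter (fun w => 2 ≤ mlt G f w (f v))) := by
    rw [Finset.disjoint_left]
    intro w hw1 hw2
    rw [Finset.mem_filter, SimpleGraph.mem_neighborFinset] at hw1 hw2
    exact star_not_both hf hw1.1 ⟨hw1.2, hw2.2⟩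
  have hsub : ((G.neighborFinset v).filter (fun w => 2 ≤ mlt G f v (f w)))
      ∪ ((G.neighborFinset v).filter (fun w => 2 ≤ mlt G f w (f v)))
      ⊆ G.neighborFinset v := by
    intro w hw
    rw [Finset.mem_union, Finset.mem_filter, Finset.mem_filter] at hw
    rcases hw with h | h <;> exact h.1
  have := Finset.card_le_card hsub
  rw [Finset.card_union_of_disjoint hdisj, hdeg] at this
  exact this

lemma sum_outd_eq_sum_ind :
    ∑ v : V, outd G f v = ∑ v : V, ind G f v := by
  have hout : ∀ v : V, outd G f v
      = ∑ w : V, if G.Adj v w ∧ 2 ≤ mlt G f v (f w) then 1 else 0 := by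
    intro v
    rw [outd, Finset.card_filter]
    rw [← Finset.sum_filter_add_sum_filter_not Finset.univ (fun w => w ∈ G.neighborFinset v)]
    have h1 : Finset.univ.filter (fun w => w ∈ G.neighborFinset v) = G.neighborFinset v := by
      ext w; simp
    rw [h1]
    have h2 : ∀ w ∈ Finset.univ.filter (fun w => ¬ w ∈ G.neighborFinset v),
        (if G.Adj v w ∧ 2 ≤ mlt G f v (f w) then 1 else 0) = 0 := by
      intro w hw
      rw [Finset.mem_filter, SimpleGraph.mem_neighborFinset] at hw
      simp [hw.2]
    rw [Finset.sum_congr rfl h2, Finset.sum_const_zero, add_zero]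
    refine Finset.sum_congr rfl (fun w hw => ?_)
    rw [SimpleGraph.mem_neighborFinset] at hw
    simp [hw]
  have hin : ∀ w : V, ind G f w
      = ∑ v : V, if G.Adj v w ∧ 2 ≤ mlt G f v (f w) then 1 else 0 := by
    intro w
    rw [ind, Finset.card_filter]
    rw [← Finset.sum_filter_add_sum_filter_not Finset.univ (fun v => v ∈ G.neighborFinset w)]
    have h1 : Finset.univ.filter (fun v => v ∈ G.neighborFinset w) = G.neighborFinset w := by
      ext v; simp
    rw [h1]
    have h2 : ∀ v ∈ Finset.univ.filter (fun v => ¬ v ∈ G.neighborFinset w),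
        (if G.Adj v w ∧ 2 ≤ mlt G f v (f w) then 1 else 0) = 0 := by
      intro v hv
      rw [Finset.mem_filter, SimpleGraph.mem_neighborFinset] at hv
      have : ¬ G.Adj v w := fun h => hv.2 h.symm
      simp [this]
    rw [Finset.sum_congr rfl h2, Finset.sum_const_zero, add_zero]
    refine Finset.sum_congr rfl (fun v hv => ?_)
    rw [SimpleGraph.mem_neighborFinset] at hv
    simp [hv, hv.symm]
  rw [Finset.sum_congr rfl (fun v _ => hout v), Finset.sum_congr rfl (fun w _ => hin w)]
  exact Finset.sum_comm

lemma sct_le (v : V) : sct G f v ≤ p := by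
  have h1 := Dst_nonempty_card hp hf hdeg v
  have h2 := Dst_card_add_sct hp hf hdeg v
  omega

lemma outd_eq (v : V) : outd G f v = p ∧ ind G f v = p := by
  have hle : ∀ u : V, ind G f u ≤ outd G f u := by
    intro u
    have h1 := outd_add_ind_le hp hf hdeg u
    have h2 := outd_add_sct hp hf hdeg u
    have h3 := sct_le hp hf hdeg u
    omega
  have hsum := sum_outd_eq_sum_ind hp hf hdeg
  have hall : ∀ u : V, ind G f u = outd G f u :=
    fun u => (Finset.sum_eq_sum_iff_of_le (fun i _ => hle i)).1 hsum.symm u (Finset.mem_univ u)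
  have h1 := outd_add_ind_le hp hf hdeg v
  have h2 := outd_add_sct hp hf hdeg v
  have h3 := sct_le hp hf hdeg v
  have h4 := hall v
  omega

lemma neighbor_covered {v w : V} (hadj : G.Adj v w) :
    2 ≤ mlt G f v (f w) ∨ 2 ≤ mlt G f w (f v) := by
  have heq := outd_eq hp hf hdeg v
  have hdisj : Disjoint ((G.neighborFinset v).filter (fun w => 2 ≤ mlt G f v (f w)))
      ((G.neighborFinset v).filter (fun w => 2 ≤ mlt G f w (f v))) := by
    rw [Finset.disjoint_left]
    intro x hx1 hx2
    rw [Finset.mem_filter, SimpleGraph.mem_neighborFinset] at hx1 hx2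
    exact star_not_both hf hx1.1 ⟨hx1.2, hx2.2⟩
  have hsub : ((G.neighborFinset v).filter (fun w => 2 ≤ mlt G f v (f w)))
      ∪ ((G.neighborFinset v).filter (fun w => 2 ≤ mlt G f w (f v)))
      ⊆ G.neighborFinset v := by
    intro x hx
    rw [Finset.mem_union, Finset.mem_filter, Finset.mem_filter] at hx
    rcases hx with h | h <;> exact h.1
  have hcard : (((G.neighborFinset v).filter (fun w => 2 ≤ mlt G f v (f w)))
      ∪ ((G.neighborFinset v).filter (fun w => 2 ≤ mlt G f w (f v)))).card
      = (G.neighborFinset v).card := by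
    rw [Finset.card_union_of_disjoint hdisj, hdeg]
    have := heq.1
    have := heq.2
    rw [outd] at *
    rw [ind] at *
    omega
  have hEq := Finset.eq_of_subset_of_card_le hsub (le_of_eq hcard.symm)
  have hwmem : w ∈ G.neighborFinset v := by rw [SimpleGraph.mem_neighborFinset]; exact hadj
  rw [← hEq, Finset.mem_union, Finset.mem_filter, Finset.mem_filter] at hwmem
  rcases hwmem with h | h
  · exact Or.inl h.2
  · exact Or.inr h.2

lemma Dst_card_eq_one (v : V) : (Dst G f v).card = 1 := by
  have h1 := Dst_nonempty_card hp hf hdeg v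
  have h2 := Dst_card_add_sct hp hf hdeg v
  have h3 : sct G f v = p := by
    have h4 := outd_add_sct hp hf hdeg v
    have h5 := (outd_eq hp hf hdeg v).1
    omega
  omega

/-- The key structure: a "partner colour" function g. -/
lemma exists_partner :
    ∃ g : V → Fin (p + 2), (∀ v, g v ≠ f v) ∧
      ∀ ⦃v w : V⦄, G.Adj v w → f w = g v ∨ f v = g w := by
  have hsingle : ∀ v : V, ∃ c : Fin (p + 2), Dst G f v = {c} :=
    fun v => Finset.card_eq_one.1 (Dst_card_eq_one hp hf hdeg v)
  choose g hg using hsingle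
  have hmem : ∀ v c, c ∈ Dst G f v ↔ c = g v := by
    intro v c
    rw [hg v, Finset.mem_singleton]
  refine ⟨g, ?_, ?_⟩
  · intro v h
    have : g v ∈ Dst G f v := (hmem v (g v)).2 rfl
    rw [Dst, Finset.mem_filter] at this
    rw [h, mlt_self hf.1 v] at this
    omega
  · intro v w hadj
    rcases neighbor_covered hp hf hdeg hadj with h | h
    · left
      exact (hmem v (f w)).1 (by rw [Dst, Finset.mem_filter]; exact ⟨Finset.mem_univ _, h⟩)
    · right
      exact (hmem w (f v)).1 (by rw [Dst, Finset.mem_filter]; exact ⟨Finset.mem_univ _, h⟩)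

end Struct

end Aux

section Colour

variable {V : Type*} {G : SimpleGraph V}

lemma colorable_of_partner {n : ℕ} (f g : V → Fin n)
    (hfg : ∀ v, g v ≠ f v)
    (hedge : ∀ ⦃v w : V⦄, G.Adj v w → f w = g v ∨ f v = g w) :
    G.Colorable (Nat.clog 2 n * 2) := by
  set L := Nat.clog 2 n with hL
  have hpow : ∀ i : Fin n, (i : ℕ) < 2 ^ L :=
    fun i => lt_of_lt_of_le i.isLt (Nat.le_pow_clog one_lt_two n)
  have hex : ∀ v : V, ∃ t : ℕ, t < L ∧ Nat.testBit (f v) t ≠ Nat.testBit (g v) t := by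
    intro v
    by_contra h
    push_neg at h
    apply hfg v
    refine (Fin.ext ?_).symm
    apply Nat.eq_of_testBit_eq
    intro i
    by_cases hi : i < L
    · exact h i hi
    · rw [Nat.testBit_lt_two_pow, Nat.testBit_lt_two_pow]
      · exact lt_of_lt_of_le (hpow (g v)) (Nat.pow_le_pow_right (by norm_num) (le_of_not_gt hi))
      · exact lt_of_lt_of_le (hpow (f v)) (Nat.pow_le_pow_right (by norm_num) (le_of_not_gt hi))
  choose t ht1 ht2 using hex
  have hcol : G.Coloring (Fin L × Bool) := by
    refine SimpleGraph.Coloring.mk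
      (fun v => (⟨t v, ht1 v⟩, Nat.testBit (f v) (t v))) ?_
    intro v w hadj heq
    rw [Prod.mk.injEq, Fin.mk.injEq] at heq
    obtain ⟨hteq, hbeq⟩ := heq
    rw [← hteq] at hbeq
    rcases hedge hadj with h | h
    · apply ht2 v
      rw [← h]
      exact hbeq
    · apply ht2 w
      rw [← h, ← hteq]
      exact hbeq.symm
  have := hcol.colorable
  simpa using this

end Colour

theorem stmt12 {V : Type*} [Fintype V] (G : SimpleGraph V) (p : ℕ) (hp : 2 ≤ p)
    (hreg : ∀ v : V, (G.neighborSet v).ncard = 2 * p)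
    (hcol : ∃ f : V → Fin (p + 2), IsStarColoring G f) :
    (G.chromaticNumber.toNat : ℝ) ≤ 3 * Real.logb 2 (p + 2) := by
  classical
  obtain ⟨f, hf⟩ := hcol
  have hdeg : ∀ v : V, (G.neighborFinset v).card = 2 * p := by
    intro v
    have h := hreg v
    rw [SimpleGraph.neighborFinset_def, ← Set.ncard_eq_toFinset_card']
    exact h
  obtain ⟨g, hg1, hg2⟩ := exists_partner hp hf hdeg
  have hcolor := colorable_of_partner f g hg1 hg2
  have hchrom : G.chromaticNumber ≤ (Nat.clog 2 (p + 2) * 2 : ℕ) := hcolor.chromaticNumber_le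
  have htoNat : G.chromaticNumber.toNat ≤ Nat.clog 2 (p + 2) * 2 :=
    ENat.toNat_le_of_le_coe hchrom
  set c := Nat.clog 2 (p + 2) with hc
  have hc2 : 2 ≤ c := by
    by_contra hcon
    have hle : c ≤ 1 := by omega
    have := (Nat.clog_le_iff_le_pow (b := 2) one_lt_two (x := p + 2) (y := 1)).1 hle
    omega
  have hlogb4 : (2 : ℝ) ≤ Real.logb 2 ((p : ℝ) + 2) := by
    have h4 : (4 : ℝ) ≤ (p : ℝ) + 2 := by
      have : (2 : ℝ) ≤ (p : ℝ) := by exact_mod_cast hp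
      linarith
    have hmono : Real.logb 2 4 ≤ Real.logb 2 ((p : ℝ) + 2) :=
      Real.logb_le_logb_of_le one_lt_two (by norm_num) h4
    have h42 : Real.logb 2 4 = 2 := by
      rw [show (4 : ℝ) = 2 ^ (2 : ℕ) by norm_num, Real.logb_pow,
        Real.logb_self_eq_one (by norm_num)]
      norm_num
    linarith
  have hlogB : ((c : ℝ) - 1) < Real.logb 2 ((p : ℝ) + 2) := by
    have hBnat : 2 ^ (c - 1) < p + 2 := by
      have := Nat.pow_pred_clog_lt_self (b := 2) one_lt_two (x := p + 2) (by omega)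
      simpa [Nat.pred_eq_sub_one] using this
    have hBreal : ((2 : ℝ)) ^ (c - 1) < (p : ℝ) + 2 := by exact_mod_cast hBnat
    have hlt := Real.logb_lt_logb (b := 2) one_lt_two (by positivity) hBreal
    rw [Real.logb_pow, Real.logb_self_eq_one (by norm_num)] at hlt
    have hcast : ((c - 1 : ℕ) : ℝ) = (c : ℝ) - 1 := by
      have : 1 ≤ c := by omega
      push_cast [this]
      ring
    rw [hcast] at hlt
    simpa using hlt
  have hkey : ((c * 2 : ℕ) : ℝ) ≤ 3 * Real.logb 2 ((p : ℝ) + 2) := by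
    rcases le_or_gt c 2 with h | h
    · have hle4 : ((c * 2 : ℕ) : ℝ) ≤ 4 := by
        have : c * 2 ≤ 4 := by omega
        exact_mod_cast this
      linarith
    · have h3 : (3 : ℝ) ≤ (c : ℝ) := by exact_mod_cast h
      push_cast
      linarith
  calc (G.chromaticNumber.toNat : ℝ) ≤ ((c * 2 : ℕ) : ℝ) := by exact_mod_cast htoNat
    _ ≤ 3 * Real.logb 2 ((p : ℝ) + 2) := hkey
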